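/- Let Φ₁ and Φ₂ be quantum channels from d×d complex matrices to m×m complex matrices, Δ = Φ₁ − Φ₂, and let r be the rank of the M-operator M(Δ). Then ‖Δ‖_ME ≤ (r/d) · ‖Δ‖_⋄. -/

import Mathlib

open Matrix Kronecker ComplexOrder

set_option maxHeartbeats 1000000

noncomputable section

/-- The square root of a PSD matrix, as `Matrix.PosSemidef.sqrt` was defined in Mathlib
(Dec 2024); that definition has since been removed. -/
noncomputable def psdSqrt {n : Type*} [Fintype n] [DecidableEq n] {A : Matrix n n ℂ}
    (hA : A.PosSemidef) : Matrix n n ℂ :=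
  (hA.1.eigenvectorUnitary : Matrix n n ℂ) * diagonal ((↑) ∘ (√·) ∘ hA.1.eigenvalues) *
    (star hA.1.eigenvectorUnitary : Matrix n n ℂ)

/-- The matrix absolute value `|A| = √(AᴴA)`. -/
noncomputable def matAbs {n : Type*} [Fintype n] [DecidableEq n] (A : Matrix n n ℂ) :
    Matrix n n ℂ :=
  psdSqrt (Matrix.posSemidef_conjTranspose_mul_self A)

/-- The trace norm `‖A‖₁ = Tr √(AᴴA)`. -/
noncomputable def traceNorm {n : Type*} [Fintype n] [DecidableEq n] (A : Matrix n n ℂ) : ℝ :=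
  ((matAbs A).trace).re

/-- The positive semidefinite square root of a PSD matrix (zero otherwise). -/
noncomputable def matSqrt {n : Type*} [Fintype n] [DecidableEq n] (σ : Matrix n n ℂ) :
    Matrix n n ℂ :=
  open scoped Classical in
  if h : σ.PosSemidef then psdSqrt h else 0

/-- A density matrix: positive semidefinite with unit trace. -/
def IsDensity {n : Type*} [Fintype n] [DecidableEq n] (σ : Matrix n n ℂ) : Prop :=
  σ.PosSemidef ∧ σ.trace = 1

/-- The Choi operator of a linear map between matrix algebras. -/
noncomputable def choi {d m : ℕ}
    (S : Matrix (Fin d) (Fin d) ℂ →ₗ[ℂ] Matrix (Fin m) (Fin m) ℂ) :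
    Matrix (Fin m × Fin d) (Fin m × Fin d) ℂ :=
  ∑ i : Fin d, ∑ j : Fin d,
    (S (Matrix.single i j 1)) ⊗ₖ (Matrix.single i j 1)

/-- The ME-norm `‖S‖_ME = ‖J(S)‖₁ / d`. -/
noncomputable def MENorm {d m : ℕ}
    (S : Matrix (Fin d) (Fin d) ℂ →ₗ[ℂ] Matrix (Fin m) (Fin m) ℂ) : ℝ :=
  traceNorm (choi S) / d

/-- The diamond norm: supremum over density matrices σ of
`‖(1 ⊗ √σ) J(S) (1 ⊗ √σ)‖₁`. -/
noncomputable def diamondNorm {d m : ℕ}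
    (S : Matrix (Fin d) (Fin d) ℂ →ₗ[ℂ] Matrix (Fin m) (Fin m) ℂ) : ℝ :=
  ⨆ σ : {σ : Matrix (Fin d) (Fin d) ℂ // IsDensity σ},
    traceNorm (((1 : Matrix (Fin m) (Fin m) ℂ) ⊗ₖ matSqrt σ.1) * choi S *
      ((1 : Matrix (Fin m) (Fin m) ℂ) ⊗ₖ matSqrt σ.1))

/-- The M-operator `M(S) = Tr_B |J(S)|`. -/
noncomputable def Mop {d m : ℕ}
    (S : Matrix (Fin d) (Fin d) ℂ →ₗ[ℂ] Matrix (Fin m) (Fin m) ℂ) :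
    Matrix (Fin d) (Fin d) ℂ :=
  Matrix.of fun k l => ∑ b : Fin m, matAbs (choi S) (b, k) (b, l)

/-- A quantum channel: completely positive (PSD Choi operator, by Choi's theorem)
and trace preserving. -/
def IsQChannel {d m : ℕ}
    (S : Matrix (Fin d) (Fin d) ℂ →ₗ[ℂ] Matrix (Fin m) (Fin m) ℂ) : Prop :=
  (choi S).PosSemidef ∧ ∀ ρ : Matrix (Fin d) (Fin d) ℂ, (S ρ).trace = ρ.trace


open scoped MatrixOrder in
lemma psdSqrt_eq_cfcSqrt {n : Type*} [Fintype n] [DecidableEq n] {A : Matrix n n ℂ}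
    (hA : A.PosSemidef) : psdSqrt hA = CFC.sqrt A := by
  have h0 : 0 ≤ A := hA.nonneg
  rw [CFC.sqrt_eq_cfc (a := A), cfc_nnreal_eq_real _ A h0, hA.1.cfc_eq, IsHermitian.cfc,
    Unitary.conjStarAlgAut_apply, psdSqrt]
  congr 2
  congr 1
  funext i
  simp [Real.coe_sqrt, Real.coe_toNNReal', max_eq_left (hA.eigenvalues_nonneg i)]

open scoped MatrixOrder in
lemma psdSqrt_posSemidef {n : Type*} [Fintype n] [DecidableEq n] {A : Matrix n n ℂ}
    (hA : A.PosSemidef) : (psdSqrt hA).PosSemidef := by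
  rw [psdSqrt_eq_cfcSqrt]; exact (CFC.sqrt_nonneg A).posSemidef

open scoped MatrixOrder in
lemma psdSqrt_mul_self {n : Type*} [Fintype n] [DecidableEq n] {A : Matrix n n ℂ}
    (hA : A.PosSemidef) : psdSqrt hA * psdSqrt hA = A := by
  rw [psdSqrt_eq_cfcSqrt]; exact CFC.sqrt_mul_sqrt_self A hA.nonneg

open scoped MatrixOrder in
lemma eq_psdSqrt_of_sq_eq {n : Type*} [Fintype n] [DecidableEq n] {A B : Matrix n n ℂ}
    (hB : B.PosSemidef) (hA : A.PosSemidef) (hsq : B ^ 2 = A) : B = psdSqrt hA := by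
  rw [psdSqrt_eq_cfcSqrt]
  exact ((CFC.sqrt_eq_iff A B hA.nonneg hB.nonneg).mpr (by rw [← sq]; exact hsq)).symm

section Aux

variable {n : Type*} [Fintype n] [DecidableEq n]

lemma matAbs_posSemidef (A : Matrix n n ℂ) : (matAbs A).PosSemidef :=
  (psdSqrt_posSemidef (Matrix.posSemidef_conjTranspose_mul_self A))

lemma matAbs_mul_self (A : Matrix n n ℂ) : matAbs A * matAbs A = Aᴴ * A :=
  (psdSqrt_mul_self (Matrix.posSemidef_conjTranspose_mul_self A))

lemma trace_cTms_eq_zero {m : Type*} [Fintype m]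
    {X : Matrix m n ℂ} (h : (Xᴴ * X).trace = 0) : X = 0 := by
  have key : (Xᴴ * X).trace = ((∑ i : n, ∑ j : m, Complex.normSq (X j i) : ℝ) : ℂ) := by
    rw [Matrix.trace]
    push_cast
    refine Finset.sum_congr rfl fun i _ => ?_
    rw [Matrix.diag_apply, Matrix.mul_apply]
    refine Finset.sum_congr rfl fun j _ => ?_
    rw [Matrix.conjTranspose_apply]
    exact (Complex.normSq_eq_conj_mul_self).symm
  rw [key] at h
  have h2 : ∑ i : n, ∑ j : m, Complex.normSq (X j i) = 0 := by exact_mod_cast h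
  ext j i
  have h3 := (Finset.sum_eq_zero_iff_of_nonneg (fun i _ =>
    Finset.sum_nonneg fun j _ => Complex.normSq_nonneg _)).mp h2 i (Finset.mem_univ i)
  have h4 := (Finset.sum_eq_zero_iff_of_nonneg (fun j _ =>
    Complex.normSq_nonneg _)).mp h3 j (Finset.mem_univ j)
  simpa using Complex.normSq_eq_zero.mp h4

lemma psd_mul_eq_zero_of_trace_eq_zero {A B : Matrix n n ℂ}
    (hA : A.PosSemidef) (hB : B.PosSemidef) (h : (A * B).trace = 0) : A * B = 0 := by
  set a := psdSqrt hA with ha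
  set b := psdSqrt hB with hb
  have haa : a * a = A := (psdSqrt_mul_self hA)
  have hbb : b * b = B := (psdSqrt_mul_self hB)
  have hah : aᴴ = a := (psdSqrt_posSemidef hA).isHermitian
  have hbh : bᴴ = b := (psdSqrt_posSemidef hB).isHermitian
  have htr : ((a * b)ᴴ * (a * b)).trace = 0 := by
    have e1 : (a * b)ᴴ * (a * b) = b * A * b := by
      rw [conjTranspose_mul, hah, hbh, ← haa]
      simp only [mul_assoc]
    rw [e1, Matrix.trace_mul_cycle, hbb, Matrix.trace_mul_comm, h]
  have hab : a * b = 0 := trace_cTms_eq_zero htr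
  calc A * B = a * (a * b) * b := by rw [← haa, ← hbb, mul_assoc, mul_assoc, mul_assoc]
  _ = 0 := by rw [hab, mul_zero, zero_mul]


lemma kron_conjTranspose {l m p q : Type*} [Fintype l] [Fintype m] [Fintype p] [Fintype q]
    (A : Matrix l m ℂ) (B : Matrix p q ℂ) : (A ⊗ₖ B)ᴴ = Aᴴ ⊗ₖ Bᴴ := by
  ext ⟨i, j⟩ ⟨k, l'⟩
  simp [Matrix.conjTranspose_apply, star_mul']

lemma sub_kron {l m p q : Type*} [Fintype l] [Fintype m] [Fintype p] [Fintype q]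
    (A B : Matrix l m ℂ) (C : Matrix p q ℂ) :
    (A - B) ⊗ₖ C = A ⊗ₖ C - B ⊗ₖ C := by
  ext ⟨i, j⟩ ⟨k, l'⟩
  simp [sub_mul]

lemma one_kron_posSemidef {m' : Type*} [Fintype m'] [DecidableEq m']
    {R : Matrix n n ℂ} (hR : R.PosSemidef) :
    ((1 : Matrix m' m' ℂ) ⊗ₖ R).PosSemidef := by
  have hb : R = (psdSqrt hR)ᴴ * psdSqrt hR := by
    rw [(psdSqrt_posSemidef hR).isHermitian.eq, (psdSqrt_mul_self hR)]
  have : (1 : Matrix m' m' ℂ) ⊗ₖ R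
      = ((1 : Matrix m' m' ℂ) ⊗ₖ psdSqrt hR)ᴴ * ((1 : Matrix m' m' ℂ) ⊗ₖ psdSqrt hR) := by
    rw [kron_conjTranspose, Matrix.conjTranspose_one, ← Matrix.mul_kronecker_mul, one_mul, ← hb]
  rw [this]
  exact Matrix.posSemidef_conjTranspose_mul_self _

lemma psd_diag_nonneg {A : Matrix n n ℂ} (hA : A.PosSemidef) (i : n) :
    0 ≤ A i i := by
  exact hA.diag_nonneg

lemma posSemidef_smul_real {A : Matrix n n ℂ} (hA : A.PosSemidef) {c : ℝ} (hc : 0 ≤ c) :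
    (((c : ℂ)) • A).PosSemidef := by
  constructor
  · show (((c : ℂ)) • A)ᴴ = ((c : ℂ)) • A
    rw [Matrix.conjTranspose_smul, hA.1.eq]
    norm_num
  · intro x
    exact (hA.smul (Complex.zero_le_real.mpr hc)).2 x

lemma matAbs_smul_real (A : Matrix n n ℂ) {c : ℝ} (hc : 0 ≤ c) :
    matAbs ((c : ℂ) • A) = (c : ℂ) • matAbs A := by
  have hpsd : (((c : ℂ)) • matAbs A).PosSemidef :=
    posSemidef_smul_real (matAbs_posSemidef A) hc
  have hsq : (((c : ℂ)) • matAbs A) ^ 2 = ((c : ℂ) • A)ᴴ * ((c : ℂ) • A) := by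
    rw [pow_two, Matrix.conjTranspose_smul, smul_mul_smul_comm, smul_mul_smul_comm,
      matAbs_mul_self]
    norm_num
  exact (eq_psdSqrt_of_sq_eq hpsd (Matrix.posSemidef_conjTranspose_mul_self _) hsq).symm


lemma trace_mul_one_kron {d m : ℕ} (P : Matrix (Fin m × Fin d) (Fin m × Fin d) ℂ)
    (X : Matrix (Fin d) (Fin d) ℂ) :
    (P * ((1 : Matrix (Fin m) (Fin m) ℂ) ⊗ₖ X)).trace
      = ((Matrix.of fun k l => ∑ b : Fin m, P (b, k) (b, l)) * X).trace := by
  simp only [Matrix.trace, Matrix.diag_apply, Matrix.mul_apply, Matrix.kroneckerMap_apply,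
    Matrix.one_apply, Fintype.sum_prod_type, Matrix.of_apply, mul_ite, mul_one, mul_zero,
    ite_mul, zero_mul, Finset.sum_ite_irrel, Finset.sum_ite_eq, Finset.sum_ite_eq',
    Finset.mem_univ, if_true, Finset.sum_mul, Finset.sum_const_zero, one_mul]
  rw [Finset.sum_comm]
  exact Finset.sum_congr rfl fun k _ => Finset.sum_comm

lemma hermitian_entry_mul_aux {P : Matrix n n ℂ} (hP : P.IsHermitian) (i j : n) :
    P i j = star (P j i) := by
  have h := congrFun (congrFun hP.eq i) j
  rw [Matrix.conjTranspose_apply] at h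
  exact h.symm

lemma hermitian_entry_mul {P : Matrix n n ℂ} (hP : P.IsHermitian) (i j : n) :
    P i j * P j i = (Complex.normSq (P j i) : ℂ) := by
  rw [hermitian_entry_mul_aux hP i j, Complex.normSq_eq_conj_mul_self]
  rfl

lemma traceNorm_le_entrySum (A : Matrix n n ℂ) :
    traceNorm A ≤ ∑ i : n, ∑ j : n, ‖A i j‖ := by
  have hP := matAbs_posSemidef A
  set P := matAbs A with hPdef
  have key : ∀ i : n, (P i i).re ≤ ∑ j : n, ‖A j i‖ := by
    intro i
    have h1 : (P * P) i i = ((∑ j : n, Complex.normSq (P j i) : ℝ) : ℂ) := by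
      rw [Matrix.mul_apply]
      push_cast
      exact Finset.sum_congr rfl fun j _ => hermitian_entry_mul hP.1 i j
    have h2 : (P * P) i i = ((∑ j : n, Complex.normSq (A j i) : ℝ) : ℂ) := by
      rw [matAbs_mul_self, Matrix.mul_apply]
      push_cast
      refine Finset.sum_congr rfl fun j _ => ?_
      rw [Matrix.conjTranspose_apply, Complex.normSq_eq_conj_mul_self]
      rfl
    have h3 : ∑ j : n, Complex.normSq (P j i) = ∑ j : n, Complex.normSq (A j i) := by
      have := h1.symm.trans h2
      exact_mod_cast this
    have h4 : 0 ≤ P i i := psd_diag_nonneg hP i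
    have h4re : 0 ≤ (P i i).re := (Complex.nonneg_iff.mp h4).1
    have h4im : (P i i).im = 0 := ((Complex.nonneg_iff.mp h4).2).symm
    have h5 : Complex.normSq (P i i) = (P i i).re ^ 2 := by
      rw [Complex.normSq_apply, h4im]
      ring
    have h6 : (P i i).re ^ 2 ≤ ∑ j : n, Complex.normSq (A j i) := by
      rw [← h5, ← h3]
      exact Finset.single_le_sum (f := fun j => Complex.normSq (P j i))
        (fun j _ => Complex.normSq_nonneg _) (Finset.mem_univ i)
    have h7 : (P i i).re ≤ Real.sqrt (∑ j : n, Complex.normSq (A j i)) := by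
      rw [← Real.sqrt_sq h4re]
      exact Real.sqrt_le_sqrt h6
    refine h7.trans ?_
    have h8 : ∑ j : n, Complex.normSq (A j i) ≤ (∑ j : n, ‖A j i‖) ^ 2 := by
      have := Finset.sum_sq_le_sq_sum_of_nonneg
        (f := fun j => ‖A j i‖) (s := Finset.univ)
        (fun j _ => norm_nonneg _)
      simpa [Complex.sq_norm] using this
    calc Real.sqrt (∑ j : n, Complex.normSq (A j i))
        ≤ Real.sqrt ((∑ j : n, ‖A j i‖) ^ 2) := Real.sqrt_le_sqrt h8
      _ = ∑ j : n, ‖A j i‖ :=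
          Real.sqrt_sq (Finset.sum_nonneg fun j _ => norm_nonneg _)
  have : traceNorm A = ∑ i : n, (P i i).re := by
    simp [traceNorm, Matrix.trace, Complex.re_sum, Matrix.diag_apply, hPdef]
  rw [this, Finset.sum_comm (γ := n)]
  exact Finset.sum_le_sum fun i _ => key i

lemma matSqrt_entry_abs_le_one {σ : Matrix n n ℂ} (hσ : σ.PosSemidef) (htr : σ.trace = 1)
    (k p : n) : ‖(matSqrt σ) k p‖ ≤ 1 := by
  have hs : matSqrt σ = psdSqrt hσ := dif_pos hσ
  rw [hs]
  set s := psdSqrt hσ with hsdef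
  have hss : s * s = σ := (psdSqrt_mul_self hσ)
  have hsh : s.IsHermitian := (psdSqrt_posSemidef hσ).isHermitian
  have h1 : (σ k k).re = ∑ j : n, Complex.normSq (s j k) := by
    have : (s * s) k k = ((∑ j : n, Complex.normSq (s j k) : ℝ) : ℂ) := by
      rw [Matrix.mul_apply]
      push_cast
      exact Finset.sum_congr rfl fun j _ => hermitian_entry_mul hsh k j
    rw [← hss, this]
    simp
  have h2 : Complex.normSq (s p k) ≤ (σ k k).re := by
    rw [h1]
    exact Finset.single_le_sum (f := fun j => Complex.normSq (s j k))
      (fun j _ => Complex.normSq_nonneg _) (Finset.mem_univ p)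
  have h3 : (σ k k).re ≤ 1 := by
    have hsum : ∑ j : n, (σ j j).re = 1 := by
      have := congrArg Complex.re htr
      simpa [Matrix.trace, Complex.re_sum, Matrix.diag_apply] using this
    have hnn : ∀ j : n, 0 ≤ (σ j j).re := fun j => (Complex.nonneg_iff.mp (psd_diag_nonneg hσ j)).1
    calc (σ k k).re ≤ ∑ j : n, (σ j j).re :=
          Finset.single_le_sum (fun j _ => hnn j) (Finset.mem_univ k)
      _ = 1 := hsum
  have h4 : Complex.normSq (s k p) ≤ 1 := by
    have : Complex.normSq (s k p) = Complex.normSq (s p k) := by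
      rw [hermitian_entry_mul_aux hsh k p]
      simp [Complex.normSq_conj]
    rw [this]
    exact h2.trans h3
  rw [Complex.norm_def]
  calc Real.sqrt (Complex.normSq (s k p)) ≤ Real.sqrt 1 := Real.sqrt_le_sqrt h4
    _ = 1 := Real.sqrt_one

end Aux
section Aux2
variable {n : Type*} [Fintype n] [DecidableEq n]

lemma kron_sub {l m p q : Type*} [Fintype l] [Fintype m] [Fintype p] [Fintype q]
    (C : Matrix l m ℂ) (A B : Matrix p q ℂ) :
    C ⊗ₖ (A - B) = C ⊗ₖ A - C ⊗ₖ B := by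
  ext ⟨i, j⟩ ⟨k, l'⟩
  simp [mul_sub]

lemma sandwich_helper {U A B : Matrix n n ℂ} (hU : Uᴴ * U = 1) :
    (U * A * Uᴴ) * (U * B * Uᴴ) = U * (A * B) * Uᴴ := by
  have h1 : (U * A * Uᴴ) * (U * B * Uᴴ) = U * A * (Uᴴ * U) * B * Uᴴ := by
    simp only [mul_assoc]
  rw [h1, hU, mul_one]
  simp only [mul_assoc]

lemma choi_sub {d m : ℕ} (S T : Matrix (Fin d) (Fin d) ℂ →ₗ[ℂ] Matrix (Fin m) (Fin m) ℂ) :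
    choi (S - T) = choi S - choi T := by
  unfold choi
  rw [← Finset.sum_sub_distrib]
  refine Finset.sum_congr rfl fun i _ => ?_
  rw [← Finset.sum_sub_distrib]
  refine Finset.sum_congr rfl fun j _ => ?_
  rw [LinearMap.sub_apply, sub_kron]

end Aux2

/-- with `r = rank M(Δ)` for a difference of channels `Δ = Φ₁ − Φ₂`,
`‖Δ‖_ME ≤ (r/d)·‖Δ‖_⋄`. -/
theorem stmt7 {d m : ℕ} (hd : 1 ≤ d)
    (Phi1 Phi2 : Matrix (Fin d) (Fin d) ℂ →ₗ[ℂ] Matrix (Fin m) (Fin m) ℂ)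
    (h1 : IsQChannel Phi1) (h2 : IsQChannel Phi2)
    (Delta : Matrix (Fin d) (Fin d) ℂ →ₗ[ℂ] Matrix (Fin m) (Fin m) ℂ)
    (hDelta : Delta = Phi1 - Phi2) :
    MENorm Delta ≤ (((Mop Delta).rank : ℝ) / d) * diamondNorm Delta := by
  classical
  set J := choi Delta with hJdef
  have hJH : J.IsHermitian := by
    rw [hJdef, hDelta, choi_sub]
    exact h1.1.isHermitian.sub h2.1.isHermitian
  set P := matAbs J with hPdef
  have hPpsd : P.PosSemidef := matAbs_posSemidef J
  have hPP : P * P = J * J := by rw [hPdef, matAbs_mul_self, hJH.eq]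
  set M := Mop Delta with hMdef
  have hMentry : ∀ k l, M k l = ∑ b : Fin m, P (b, k) (b, l) := fun k l => rfl
  have hMH : M.IsHermitian := by
    show Mᴴ = M
    ext l k
    rw [Matrix.conjTranspose_apply, hMentry k l, hMentry l k, star_sum]
    exact Finset.sum_congr rfl fun b _ =>
      (hermitian_entry_mul_aux hPpsd.1 (b, l) (b, k)).symm
  -- spectral data for M
  set U : Matrix (Fin d) (Fin d) ℂ := (hMH.eigenvectorUnitary : Matrix (Fin d) (Fin d) ℂ)
    with hUdef
  set eig : Fin d → ℝ := hMH.eigenvalues with heig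
  have hstar : star U = Uᴴ := rfl
  have hU1' : U * Uᴴ = 1 := by
    rw [← hstar]; exact Matrix.mem_unitaryGroup_iff.mp hMH.eigenvectorUnitary.2
  have hU2' : Uᴴ * U = 1 := by
    rw [← hstar]; exact Matrix.mem_unitaryGroup_iff'.mp hMH.eigenvectorUnitary.2
  set D : Matrix (Fin d) (Fin d) ℂ := Matrix.diagonal (RCLike.ofReal ∘ eig) with hD
  have hspec : M = U * D * Uᴴ := by
    rw [← hstar]; have := hMH.spectral_theorem; rwa [Unitary.conjStarAlgAut_apply] at this
  set E : Matrix (Fin d) (Fin d) ℂ :=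
    Matrix.diagonal (fun i => if eig i = 0 then (0 : ℂ) else 1) with hE
  set Pi' : Matrix (Fin d) (Fin d) ℂ := U * E * Uᴴ with hPi
  have hEnn : ∀ i : Fin d, (0 : ℂ) ≤ (if eig i = 0 then (0 : ℂ) else 1) := by
    intro i
    by_cases h : eig i = 0
    · simp [h]
    · simpa [h, Complex.ofReal_one] using Complex.zero_le_real.mpr (zero_le_one (α := ℝ))
  have hEpsd : E.PosSemidef := by
    rw [hE]; exact Matrix.posSemidef_diagonal_iff.mpr hEnn
  have hPipsd : Pi'.PosSemidef := by
    rw [hPi]; exact hEpsd.mul_mul_conjTranspose_same U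
  have hPiH : Pi'ᴴ = Pi' := hPipsd.1.eq
  have hEE : E * E = E := by
    rw [hE, Matrix.diagonal_mul_diagonal]
    have hfun : (fun i => (if eig i = 0 then (0 : ℂ) else 1) * (if eig i = 0 then (0 : ℂ) else 1))
        = fun i => if eig i = 0 then (0 : ℂ) else 1 := by
      funext i
      by_cases h : eig i = 0 <;> simp [h]
    rw [hfun]
  have hPi2 : Pi' * Pi' = Pi' := by
    rw [hPi, sandwich_helper hU2', hEE]
  have hDE : D * E = D := by
    rw [hD, hE, Matrix.diagonal_mul_diagonal]
    have hfun : (fun i => (RCLike.ofReal ∘ eig) i * (if eig i = 0 then (0 : ℂ) else 1))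
        = RCLike.ofReal ∘ eig := by
      funext i
      by_cases h : eig i = 0 <;> simp [h, Function.comp]
    rw [hfun]
  have hMPi : M * Pi' = M := by
    rw [hspec, hPi, sandwich_helper hU2', hDE]
  have htrE : E.trace = ((M.rank : ℕ) : ℂ) := by
    rw [hE, Matrix.trace_diagonal, hMH.rank_eq_card_non_zero_eigs, Fintype.card_subtype,
      ← Finset.sum_boole, heig]
    refine Finset.sum_congr rfl fun i _ => ?_
    by_cases h : hMH.eigenvalues i = 0 <;> simp [h]
  have htrPi : Pi'.trace = ((M.rank : ℕ) : ℂ) := by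
    rw [hPi, Matrix.trace_mul_cycle, hU2', one_mul, htrE]
  -- support facts
  set F : Matrix (Fin d) (Fin d) ℂ :=
    Matrix.diagonal (fun i => if eig i = 0 then (1 : ℂ) else 0) with hF
  have hFnn : ∀ i : Fin d, (0 : ℂ) ≤ (if eig i = 0 then (1 : ℂ) else 0) := by
    intro i
    by_cases h : eig i = 0
    · simpa [h, Complex.ofReal_one] using Complex.zero_le_real.mpr (zero_le_one (α := ℝ))
    · simp [h]
  have hFpsd : F.PosSemidef := by
    rw [hF]; exact Matrix.posSemidef_diagonal_iff.mpr hFnn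
  have hEF : E + F = 1 := by
    rw [hE, hF, Matrix.diagonal_add, ← Matrix.diagonal_one]
    have hfun : (fun i => (if eig i = 0 then (0 : ℂ) else 1) + (if eig i = 0 then (1 : ℂ) else 0))
        = fun _ => (1 : ℂ) := by
      funext i
      by_cases h : eig i = 0 <;> simp [h]
    rw [hfun]
  have h1mPi : (1 : Matrix (Fin d) (Fin d) ℂ) - Pi' = U * F * Uᴴ := by
    have hone : U * (1 : Matrix (Fin d) (Fin d) ℂ) * Uᴴ = 1 := by rw [mul_one, hU1']
    rw [← hone, hPi, ← Matrix.sub_mul, ← Matrix.mul_sub]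
    have h1E : (1 : Matrix (Fin d) (Fin d) ℂ) - E = F := by
      rw [← hEF]; abel
    rw [h1E]
  have h1mPipsd : ((1 : Matrix (Fin d) (Fin d) ℂ) - Pi').PosSemidef := by
    rw [h1mPi]; exact hFpsd.mul_mul_conjTranspose_same U
  set Q : Matrix (Fin m × Fin d) (Fin m × Fin d) ℂ :=
    (1 : Matrix (Fin m) (Fin m) ℂ) ⊗ₖ ((1 : Matrix (Fin d) (Fin d) ℂ) - Pi') with hQ
  have hQpsd : Q.PosSemidef := by
    rw [hQ]; exact one_kron_posSemidef h1mPipsd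
  have htr0 : (P * Q).trace = 0 := by
    rw [hQ, trace_mul_one_kron]
    have hofM : (Matrix.of fun k l => ∑ b : Fin m, P (b, k) (b, l)) = M := rfl
    rw [hofM, Matrix.mul_sub, Matrix.trace_sub, mul_one, hMPi, sub_self]
  have hPQ : P * Q = 0 := psd_mul_eq_zero_of_trace_eq_zero hPpsd hQpsd htr0
  have hQP : Q * P = 0 := by
    have h := congrArg Matrix.conjTranspose hPQ
    rwa [Matrix.conjTranspose_mul, hQpsd.1.eq, hPpsd.1.eq, Matrix.conjTranspose_zero] at h
  have hJQ : J * Q = 0 := by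
    have hz : (J * Q)ᴴ * (J * Q) = 0 := by
      calc (J * Q)ᴴ * (J * Q) = Qᴴ * (Jᴴ * (J * Q)) := by
            rw [Matrix.conjTranspose_mul]; simp only [mul_assoc]
        _ = Q * ((J * J) * Q) := by
            rw [hQpsd.1.eq, hJH.eq]; simp only [mul_assoc]
        _ = Q * (P * (P * Q)) := by rw [← hPP]; simp only [mul_assoc]
        _ = 0 := by rw [hPQ, mul_zero, mul_zero]
    exact Matrix.conjTranspose_mul_self_eq_zero.mp hz
  have hkron1 : Q = 1 - (1 : Matrix (Fin m) (Fin m) ℂ) ⊗ₖ Pi' := by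
    rw [hQ, kron_sub, Matrix.one_kronecker_one]
  have hJPi : J * ((1 : Matrix (Fin m) (Fin m) ℂ) ⊗ₖ Pi') = J := by
    have h := hJQ
    rw [hkron1, Matrix.mul_sub, mul_one, sub_eq_zero] at h
    exact h.symm
  have hPiJ : ((1 : Matrix (Fin m) (Fin m) ℂ) ⊗ₖ Pi') * J = J := by
    have h := congrArg Matrix.conjTranspose hJPi
    rwa [Matrix.conjTranspose_mul, kron_conjTranspose, Matrix.conjTranspose_one,
      hPiH, hJH.eq] at h
  have htrPM : P.trace = M.trace := by
    rw [Matrix.trace, Matrix.trace, Fintype.sum_prod_type, Finset.sum_comm]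
    exact Finset.sum_congr rfl fun k _ => (hMentry k k).symm
  have hTnonneg : 0 ≤ traceNorm J := by
    rw [traceNorm, ← hPdef, Matrix.trace, Complex.re_sum]
    exact Finset.sum_nonneg fun i _ =>
      (Complex.nonneg_iff.mp (psd_diag_nonneg hPpsd i)).1
  have hMEeq : MENorm Delta = traceNorm J / d := by rw [MENorm, ← hJdef]
  rcases Nat.eq_zero_or_pos M.rank with hr0 | hrpos
  · -- rank zero case
    have hcard : Fintype.card {i // hMH.eigenvalues i ≠ 0} = 0 := by
      rw [← hMH.rank_eq_card_non_zero_eigs]; exact hr0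
    have heig0 : ∀ i, eig i = 0 := by
      intro i
      rw [heig]
      by_contra h
      exact (Fintype.card_eq_zero_iff.mp hcard).false ⟨i, h⟩
    have htrM : M.trace = 0 := by
      rw [hspec, Matrix.trace_mul_cycle, hU2', one_mul, hD, Matrix.trace_diagonal]
      simp [heig0, Function.comp]
    have hT0 : traceNorm J = 0 := by
      rw [traceNorm, ← hPdef, htrPM, htrM]
      simp
    rw [hMEeq, hT0, hr0]
    simp
  · -- positive rank case
    have hrR : (0 : ℝ) < ((M.rank : ℕ) : ℝ) := by exact_mod_cast hrpos
    set c1 : ℝ := (((M.rank : ℕ) : ℝ))⁻¹ with hc1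
    have hc1nn : 0 ≤ c1 := inv_nonneg.mpr hrR.le
    set σ0 : Matrix (Fin d) (Fin d) ℂ := ((c1 : ℂ)) • Pi' with hσ0
    have hσpsd : σ0.PosSemidef := by
      rw [hσ0]; exact posSemidef_smul_real hPipsd hc1nn
    have hσtr : σ0.trace = 1 := by
      rw [hσ0, Matrix.trace_smul, htrPi, smul_eq_mul, hc1]
      push_cast
      exact inv_mul_cancel₀ (by exact_mod_cast hrpos.ne')
    have hdens : IsDensity σ0 := ⟨hσpsd, hσtr⟩
    set c2 : ℝ := (Real.sqrt (((M.rank : ℕ) : ℝ)))⁻¹ with hc2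
    set s0 : Matrix (Fin d) (Fin d) ℂ := ((c2 : ℂ)) • Pi' with hs0
    have hs0psd : s0.PosSemidef := by
      rw [hs0]; exact posSemidef_smul_real hPipsd (inv_nonneg.mpr (Real.sqrt_nonneg _))
    have hc2sq : (c2 : ℂ) * (c2 : ℂ) = ((c1 : ℝ) : ℂ) := by
      rw [← Complex.ofReal_mul]
      congr 1
      rw [hc2, hc1, ← mul_inv, Real.mul_self_sqrt (Nat.cast_nonneg _)]
    have hs0sq : s0 ^ 2 = σ0 := by
      rw [hs0, pow_two, smul_mul_smul_comm, hPi2, hσ0, hc2sq]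
    have hmsqrt : matSqrt σ0 = s0 := by
      rw [matSqrt, dif_pos hσpsd]
      exact (eq_psdSqrt_of_sq_eq hs0psd hσpsd hs0sq).symm
    have hval : traceNorm (((1 : Matrix (Fin m) (Fin m) ℂ) ⊗ₖ matSqrt σ0) * J *
        ((1 : Matrix (Fin m) (Fin m) ℂ) ⊗ₖ matSqrt σ0)) = c1 * traceNorm J := by
      rw [hmsqrt, hs0, Matrix.kronecker_smul]
      have hKJK : ((1 : Matrix (Fin m) (Fin m) ℂ) ⊗ₖ Pi') * J *
          ((1 : Matrix (Fin m) (Fin m) ℂ) ⊗ₖ Pi') = J := by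
        rw [hPiJ, hJPi]
      have hsm : ((c2 : ℂ) • ((1 : Matrix (Fin m) (Fin m) ℂ) ⊗ₖ Pi')) * J *
          ((c2 : ℂ) • ((1 : Matrix (Fin m) (Fin m) ℂ) ⊗ₖ Pi'))
          = ((c2 : ℂ) * (c2 : ℂ)) • (((1 : Matrix (Fin m) (Fin m) ℂ) ⊗ₖ Pi') * J *
            ((1 : Matrix (Fin m) (Fin m) ℂ) ⊗ₖ Pi')) := by
        rw [smul_mul_assoc, smul_mul_assoc, mul_smul_comm, smul_smul]
      rw [hsm, hKJK, hc2sq]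
      simp only [traceNorm]
      rw [matAbs_smul_real J hc1nn, Matrix.trace_smul, smul_eq_mul]
      simp [Complex.mul_re]
    set fval : {σ : Matrix (Fin d) (Fin d) ℂ // IsDensity σ} → ℝ := fun σ =>
      traceNorm (((1 : Matrix (Fin m) (Fin m) ℂ) ⊗ₖ matSqrt σ.1) * J *
        ((1 : Matrix (Fin m) (Fin m) ℂ) ⊗ₖ matSqrt σ.1)) with hfval
    have hbdd : BddAbove (Set.range fval) := by
      set S : ℝ := ∑ u : Fin m × Fin d, ∑ v : Fin m × Fin d, ‖J u v‖ with hS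
      refine ⟨(Fintype.card (Fin m × Fin d) : ℝ) * ((Fintype.card (Fin m × Fin d) : ℝ) * S), ?_⟩
      rintro x ⟨⟨σ, hσd⟩, rfl⟩
      set s : Matrix (Fin d) (Fin d) ℂ := matSqrt σ with hs
      have hsb : ∀ k p, ‖s k p‖ ≤ 1 := fun k p => by
        rw [hs]; exact matSqrt_entry_abs_le_one hσd.1 hσd.2 k p
      set Y : Matrix (Fin m × Fin d) (Fin m × Fin d) ℂ :=
        ((1 : Matrix (Fin m) (Fin m) ℂ) ⊗ₖ s) * J * ((1 : Matrix (Fin m) (Fin m) ℂ) ⊗ₖ s)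
        with hY
      have hYentry : ∀ (a : Fin m) (k : Fin d) (b : Fin m) (l : Fin d),
          Y (a, k) (b, l) = ∑ p : Fin d, ∑ q : Fin d, s k p * J (a, p) (b, q) * s q l := by
        intro a k b l
        rw [hY]
        simp only [Matrix.mul_apply, Matrix.kroneckerMap_apply, Matrix.one_apply,
          Fintype.sum_prod_type, ite_mul, mul_ite, zero_mul, mul_zero, one_mul, mul_one,
          Finset.sum_ite_irrel, Finset.sum_ite_eq, Finset.sum_ite_eq', Finset.mem_univ,
          if_true, Finset.sum_const_zero, Finset.sum_mul, Finset.mul_sum]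
        try rw [Finset.sum_comm]
        try exact Finset.sum_congr rfl fun p _ => Finset.sum_congr rfl fun q _ => by ring
      have hsubq : ∀ (w : Fin m × Fin d) (b : Fin m),
          ∑ q : Fin d, ‖J w (b, q)‖ ≤ ∑ v : Fin m × Fin d, ‖J w v‖ := by
        intro w b
        rw [Fintype.sum_prod_type]
        exact Finset.single_le_sum (f := fun b' => ∑ q : Fin d, ‖J w (b', q)‖)
          (fun _ _ => Finset.sum_nonneg fun _ _ => norm_nonneg _) (Finset.mem_univ b)
      have hsub2 : ∀ (a b : Fin m),
          ∑ p : Fin d, ∑ q : Fin d, ‖J (a, p) (b, q)‖ ≤ S := by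
        intro a b
        calc ∑ p : Fin d, ∑ q : Fin d, ‖J (a, p) (b, q)‖
            ≤ ∑ p : Fin d, ∑ v : Fin m × Fin d, ‖J (a, p) v‖ :=
              Finset.sum_le_sum fun p _ => hsubq (a, p) b
          _ ≤ S := by
              conv_rhs => rw [hS, Fintype.sum_prod_type]
              exact Finset.single_le_sum
                (f := fun a' => ∑ p : Fin d, ∑ v : Fin m × Fin d, ‖J (a', p) v‖)
                (fun _ _ => Finset.sum_nonneg fun _ _ =>
                  Finset.sum_nonneg fun _ _ => norm_nonneg _) (Finset.mem_univ a)
      have hYS : ∀ (u v : Fin m × Fin d), ‖Y u v‖ ≤ S := by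
        rintro ⟨a, k⟩ ⟨b, l⟩
        rw [hYentry a k b l]
        refine ((norm_sum_le _ _).trans ?_).trans (hsub2 a b)
        refine Finset.sum_le_sum fun p _ => ?_
        refine (norm_sum_le _ _).trans ?_
        refine Finset.sum_le_sum fun q _ => ?_
        rw [norm_mul, norm_mul]
        calc ‖s k p‖ * ‖J (a, p) (b, q)‖ * ‖s q l‖
            ≤ 1 * ‖J (a, p) (b, q)‖ * 1 := by
              have h1 : ‖s k p‖ * ‖J (a, p) (b, q)‖
                  ≤ 1 * ‖J (a, p) (b, q)‖ :=
                mul_le_mul_of_nonneg_right (hsb k p) (norm_nonneg _)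
              exact mul_le_mul h1 (hsb q l) (norm_nonneg _) (by positivity)
          _ = ‖J (a, p) (b, q)‖ := by ring
      have hfY : fval ⟨σ, hσd⟩ = traceNorm Y := by rw [hfval]
      calc fval ⟨σ, hσd⟩
          ≤ ∑ u : Fin m × Fin d, ∑ v : Fin m × Fin d, ‖Y u v‖ := by
            rw [hfY]; exact traceNorm_le_entrySum Y
        _ ≤ ∑ _u : Fin m × Fin d, ∑ _v : Fin m × Fin d, S :=
            Finset.sum_le_sum fun u _ => Finset.sum_le_sum fun v _ => hYS u v
        _ = (Fintype.card (Fin m × Fin d) : ℝ) * ((Fintype.card (Fin m × Fin d) : ℝ) * S) := by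
            simp [Finset.sum_const, Finset.card_univ, nsmul_eq_mul]
    have hle : c1 * traceNorm J ≤ diamondNorm Delta := by
      have hsup : diamondNorm Delta = ⨆ σ : {σ : Matrix (Fin d) (Fin d) ℂ // IsDensity σ},
          fval σ := by
        rw [diamondNorm, ← hJdef, hfval]
      rw [hsup, ← hval]
      exact le_ciSup hbdd ⟨σ0, hdens⟩
    rw [hMEeq]
    have hdR : (0 : ℝ) < (d : ℝ) := by
      have : 0 < d := lt_of_lt_of_le Nat.zero_lt_one hd
      exact_mod_cast this
    calc traceNorm J / (d : ℝ) = (((M.rank : ℕ) : ℝ) / d) * (c1 * traceNorm J) := by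
          have hdne : (d : ℝ) ≠ 0 := hdR.ne'
          have hrne : ((M.rank : ℕ) : ℝ) ≠ 0 := hrR.ne'
          rw [hc1]
          field_simp
      _ ≤ (((M.rank : ℕ) : ℝ) / d) * diamondNorm Delta :=
          mul_le_mul_of_nonneg_left hle (div_nonneg (Nat.cast_nonneg _) (Nat.cast_nonneg _))

end
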